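/- Let S be a numerical semigroup containing m ≥ 2 with Apéry tuple (a_1, ..., a_{m−1}) (a_i ∈ Ap(S;m), a_i ≡ i mod m). In the Kunz poset of S (on ℤ_m, with ī ⪯ j̄ iff a_{j−i mod m} + a_i = a_j), an element j̄ covers ī if and only if j̄ − ī is an atom of the poset. -/

import Mathlib

/-- The Apéry set `Ap(S; m) = {n ∈ S : n - m ∉ S}`. -/
def apSet (S : Set ℤ) (m : ℤ) : Set ℤ := {n | n ∈ S ∧ n - m ∉ S}

/-- `S` is a numerical semigroup: a cofinite subset of the nonnegative
integers containing `0` and closed under addition. -/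
def IsNumericalSemigroup (S : Set ℤ) : Prop :=
  (0 : ℤ) ∈ S ∧ (∀ x ∈ S, ∀ y ∈ S, x + y ∈ S) ∧ (∀ x ∈ S, 0 ≤ x) ∧
    {n : ℤ | 0 ≤ n ∧ n ∉ S}.Finite

theorem stmt_16 (S : Set ℤ) (hS : IsNumericalSemigroup S)
    (m : ℕ) (hm2 : 2 ≤ m) (hm : (m : ℤ) ∈ S)
    -- the Apéry tuple, indexed by residue classes mod `m`
    (A : ZMod m → ℤ) (hA0 : A 0 = 0)
    (hA : ∀ i : ZMod m, A i ∈ apSet S (m : ℤ) ∧ ((A i : ZMod m) = i)) :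
    -- the Kunz poset relation `ī ⪯ j̄  iff  a_{j-i} + a_i = a_j`
    ∀ i j : ZMod m,
      -- `j` covers `i`
      (((A (j - i) + A i = A j) ∧ i ≠ j) ∧
        ¬∃ z : ZMod m, ((A (z - i) + A i = A z) ∧ i ≠ z) ∧
          ((A (j - z) + A z = A j) ∧ z ≠ j))
      ↔
      -- `i ≺ j` and `j - i` is an atom
      (((A (j - i) + A i = A j) ∧ i ≠ j) ∧
        (((A (j - i) + A 0 = A (j - i)) ∧ (0 : ZMod m) ≠ j - i) ∧
          ¬∃ z : ZMod m, ((A (z - 0) + A 0 = A z) ∧ (0 : ZMod m) ≠ z) ∧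
            ((A ((j - i) - z) + A z = A (j - i)) ∧ z ≠ j - i))) := by
  obtain ⟨h0S, hadd, hpos, hfin⟩ := hS
  have hmpos : (0:ℤ) < (m:ℤ) := by exact_mod_cast Nat.lt_of_lt_of_le two_pos hm2
  have hmul : ∀ s ∈ S, ∀ n : ℕ, s + (n : ℤ) * (m:ℤ) ∈ S := by
    intro s hs n
    induction n with
    | zero => simpa using hs
    | succ k ih =>
      have e : s + ((k+1 : ℕ) : ℤ) * (m:ℤ) = (s + (k:ℤ)*(m:ℤ)) + (m:ℤ) := by
        push_cast; ring
      rw [e]; exact hadd _ ih _ hm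
  have hmin : ∀ c : ZMod m, ∀ s ∈ S, ((s : ℤ) : ZMod m) = c → A c ≤ s := by
    intro c s hs hsc
    by_contra hlt
    push_neg at hlt
    have hdvd : ((m:ℕ):ℤ) ∣ (A c - s) := by
      have h0 : ((A c - s : ℤ) : ZMod m) = 0 := by
        push_cast
        rw [(hA c).2, hsc]; ring
      exact (ZMod.intCast_zmod_eq_zero_iff_dvd _ m).mp h0
    obtain ⟨t, ht⟩ := hdvd
    have ht1 : 1 ≤ t := by nlinarith
    have e : A c - (m:ℤ) = s + (((t-1).toNat : ℤ)) * (m:ℤ) := by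
      rw [Int.toNat_of_nonneg (by omega)]
      have : A c - s = t * m := by linarith
      linarith [this]
    have hmem := hmul s hs (t-1).toNat
    rw [← e] at hmem
    exact (hA c).1.2 hmem
  have hsum : ∀ x y : ZMod m, A (x + y) ≤ A x + A y := by
    intro x y
    apply hmin _ _ (hadd _ (hA x).1.1 _ (hA y).1.1)
    push_cast
    rw [(hA x).2, (hA y).2]
  intro i j
  constructor
  · rintro ⟨⟨h1, hne⟩, hcov⟩
    refine ⟨⟨h1, hne⟩, ⟨by simp [hA0], fun h => hne (sub_eq_zero.mp h.symm).symm⟩, ?_⟩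
    rintro ⟨z, ⟨_, hz0⟩, ⟨hz2, hzji⟩⟩
    apply hcov
    have e1 : A j ≤ A ((j-i)-z) + A (z+i) := by
      have h := hsum ((j-i)-z) (z+i)
      rw [show (j-i)-z + (z+i) = j by ring] at h
      exact h
    have e2 : A (z+i) ≤ A z + A i := hsum z i
    have key : A z + A i = A (z + i) := by linarith
    refine ⟨z + i, ⟨?_, ?_⟩, ?_, ?_⟩
    · rw [show z + i - i = z by ring]; exact key
    · intro h; exact hz0 (right_eq_add.mp h).symm
    · rw [show j - (z+i) = (j-i)-z by ring]; linarith
    · intro h; exact hzji (by rw [← h]; ring)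
  · rintro ⟨⟨h1, hne⟩, _, hatom⟩
    refine ⟨⟨h1, hne⟩, ?_⟩
    rintro ⟨z, ⟨h2, hiz⟩, ⟨h3, hzj⟩⟩
    apply hatom
    refine ⟨z - i, ⟨by simp [hA0], fun h => hiz (sub_eq_zero.mp h.symm).symm⟩, ?_, ?_⟩
    · rw [show (j-i) - (z-i) = j - z by ring]; linarith
    · intro h; exact hzj (by simpa using congrArg (· + i) h)
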